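/- arXiv:2509.15601 — 4 statements merged into one kernel-verified Lean document; each statement's English description precedes it below -/
import Mathlib

section
/- If A ∈ ℂ^{M×Q} and B ∈ ℂ^{N×Q} both have Kruskal rank Q (i.e., full column rank equal to Q in every subset sense), then their column-wise Khatri-Rao product A ⊙ B ∈ ℂ^{MN×Q} has rank Q. -/
open Matrix

/-- The Kruskal rank of a matrix. -/
noncomputable def krank {m : Type*} [Fintype m] {n : ℕ}
    (A : Matrix m (Fin n) ℂ) : ℕ :=
  sSup {k : ℕ | k ≤ n ∧ ∀ s : Finset (Fin n), s.card = k →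
    LinearIndependent ℂ (fun j : s => (fun i => A i (j : Fin n)))}

/-- Column-wise Kronecker (Khatri-Rao) product. -/
def khatriRao {M N Q : ℕ} (A : Matrix (Fin M) (Fin Q) ℂ)
    (B : Matrix (Fin N) (Fin Q) ℂ) : Matrix (Fin M × Fin N) (Fin Q) ℂ :=
  fun p q => A p.1 q * B p.2 q

set_option maxHeartbeats 1000000 in
lemma linindep_of_krank_eq {m : Type*} [Fintype m] {n : ℕ}
    (A : Matrix m (Fin n) ℂ) (h : krank A = n) : LinearIndependent ℂ Aᵀ := by
  set S : Set ℕ := {k : ℕ | k ≤ n ∧ ∀ s : Finset (Fin n), s.card = k →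
    LinearIndependent ℂ (fun j : s => (fun i => A i (j : Fin n)))} with hS
  have h0 : 0 ∈ S := by
    refine ⟨Nat.zero_le _, fun s hs => ?_⟩
    have he : s = ∅ := Finset.card_eq_zero.mp hs
    subst he
    haveI : IsEmpty ((∅ : Finset (Fin n)) : Type) :=
      ⟨fun j => (Finset.notMem_empty _ j.2)⟩
    exact linearIndependent_empty_type
  have hbdd : BddAbove S := ⟨n, fun k hk => hk.1⟩
  have hmem : sSup S ∈ S := Nat.sSup_mem ⟨0, h0⟩ hbdd
  have hk : sSup S = n := h
  rw [hk] at hmem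
  have huniv := hmem.2 Finset.univ (by simp)
  have hinj : Function.Injective (fun j : Fin n =>
      (⟨j, Finset.mem_univ j⟩ : (Finset.univ : Finset (Fin n)))) :=
    fun a b hab => by simpa using congrArg Subtype.val hab
  exact huniv.comp _ hinj

theorem rank_khatriRao_of_full_krank
    {M N Q : ℕ} (A : Matrix (Fin M) (Fin Q) ℂ) (B : Matrix (Fin N) (Fin Q) ℂ)
    (hA : krank A = Q) (hB : krank B = Q) :
    (khatriRao A B).rank = Q := by
  have hAi : LinearIndependent ℂ Aᵀ := linindep_of_krank_eq A hA
  have hBi : LinearIndependent ℂ Bᵀ := linindep_of_krank_eq B hB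
  have hKR : LinearIndependent ℂ (khatriRao A B)ᵀ := by
    refine Fintype.linearIndependent_iff.mpr ?_
    intro c hc q
    by_contra hq
    have key : ∀ nn : Fin N, ∀ p : Fin Q, c p * B nn p = 0 := by
      intro nn
      have hAi' := Fintype.linearIndependent_iff.mp hAi
      apply hAi' (fun p => c p * B nn p)
      funext mm
      have := congrFun hc (mm, nn)
      simp only [Finset.sum_apply, Pi.smul_apply, smul_eq_mul, Pi.zero_apply,
        transpose_apply, khatriRao] at this ⊢
      rw [← this]
      ring_nf
      apply Finset.sum_congr rfl
      intro x _
      ring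
    have hBq : Bᵀ q = 0 := by
      funext nn
      have h1 := key nn q
      rcases mul_eq_zero.mp h1 with h | h
      · exact absurd h hq
      · exact h
    exact hBi.ne_zero q hBq
  rw [Matrix.rank_eq_finrank_span_cols, finrank_span_eq_card (show LinearIndependent ℂ (khatriRao A B).col from hKR),
    Fintype.card_fin]
end

section
/- Under the hypotheses of the previous statement, if U_s ∈ ℂ^{K×Q} is any matrix whose columns form an orthonormal basis of the eigenspace corresponding to the Q eigenvalues larger than σ², then there exists an invertible matrix T ∈ ℂ^{Q×Q} such that U_s = A T. -/
open Matrix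

theorem signal_subspace_factorization
    {K Q : ℕ} (hQK : Q < K)
    (A : Matrix (Fin K) (Fin Q) ℂ) (hA : A.rank = Q)
    (d : Fin Q → ℝ) (hd : ∀ q, 0 < d q)
    (s : ℝ) (hs : 0 < s)
    (R : Matrix (Fin K) (Fin K) ℂ)
    (hRdef : R = A * Matrix.diagonal (fun q => (d q : ℂ)) * A.conjTranspose
      + (s : ℂ) • (1 : Matrix (Fin K) (Fin K) ℂ))
    (Us : Matrix (Fin K) (Fin Q) ℂ)
    -- the columns of `Us` are orthonormal
    (horth : Orthonormal ℂ
      (fun q : Fin Q => (EuclideanSpace.equiv (Fin K) ℂ).symm (fun i => Us i q)))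
    -- and they span the eigenspace corresponding to the eigenvalues larger than `s`
    (hspan : Submodule.span ℂ
        (Set.range (fun q : Fin Q =>
          (EuclideanSpace.equiv (Fin K) ℂ).symm (fun i => Us i q)))
      = ⨆ (μ : ℝ) (_ : s < μ),
          Module.End.eigenspace
            (Matrix.toEuclideanLin R : Module.End ℂ (EuclideanSpace ℂ (Fin K)))
            (μ : ℂ)) :
    ∃ T : Matrix (Fin Q) (Fin Q) ℂ, IsUnit T ∧ Us = A * T := by
  classical
  -- Step 1: the eigenspaces for eigenvalues > s are contained in the range of A
  have key : (⨆ (μ : ℝ) (_ : s < μ),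
      Module.End.eigenspace
        (Matrix.toEuclideanLin R : Module.End ℂ (EuclideanSpace ℂ (Fin K)))
        (μ : ℂ)) ≤ LinearMap.range (Matrix.toEuclideanLin A) := by
    refine iSup_le fun μ => iSup_le fun hμ => fun v hv => ?_
    rw [Module.End.mem_eigenspace_iff] at hv
    set x : Fin K → ℂ := (WithLp.equiv 2 (Fin K → ℂ)) v with hx
    have hv' : R *ᵥ x = (μ : ℂ) • x := by
      have := congrArg (WithLp.equiv 2 (Fin K → ℂ)) hv
      exact this
    have hμs : ((μ : ℂ) - (s : ℂ)) ≠ 0 := by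
      have : (s : ℂ) ≠ (μ : ℂ) := by
        exact_mod_cast (ne_of_lt hμ)
      exact sub_ne_zero.mpr (Ne.symm this)
    have h1 : (A * Matrix.diagonal (fun q => (d q : ℂ)) * A.conjTranspose) *ᵥ x
        = ((μ : ℂ) - s) • x := by
      have h2 : (A * Matrix.diagonal (fun q => (d q : ℂ)) * A.conjTranspose) *ᵥ x
          + (s : ℂ) • x = (μ : ℂ) • x := by
        rw [hRdef] at hv'
        simpa [Matrix.add_mulVec, Matrix.smul_mulVec] using hv'
      rw [sub_smul]
      exact eq_sub_of_add_eq h2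
    refine ⟨(WithLp.equiv 2 (Fin Q → ℂ)).symm
      (((μ : ℂ) - s)⁻¹ • ((Matrix.diagonal (fun q => (d q : ℂ)) * A.conjTranspose) *ᵥ x)), ?_⟩
    rw [WithLp.equiv_symm_apply, Matrix.toEuclideanLin_apply_piLp_toLp]
    have : A *ᵥ (((μ : ℂ) - s)⁻¹ • ((Matrix.diagonal (fun q => (d q : ℂ)) * A.conjTranspose) *ᵥ x)) = x := by
      rw [Matrix.mulVec_smul, Matrix.mulVec_mulVec, ← Matrix.mul_assoc, h1,
        smul_smul, inv_mul_cancel₀ hμs, one_smul]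
    rw [this]
    exact (WithLp.equiv 2 (Fin K → ℂ)).symm_apply_apply v
  -- Step 2: each column of Us is in the range of A
  have hcol : ∀ q : Fin Q, ∃ w : Fin Q → ℂ, A *ᵥ w = fun i => Us i q := by
    intro q
    have hmem : (EuclideanSpace.equiv (Fin K) ℂ).symm (fun i => Us i q)
        ∈ LinearMap.range (Matrix.toEuclideanLin A) := by
      apply key
      rw [← hspan]
      exact Submodule.subset_span (Set.mem_range_self q)
    obtain ⟨w, hw⟩ := hmem
    refine ⟨(WithLp.equiv 2 (Fin Q → ℂ)) w, ?_⟩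
    have := congrArg (WithLp.equiv 2 (Fin K → ℂ)) hw
    exact this
  choose w hw using hcol
  refine ⟨Matrix.of (fun j q => w q j), ?_, ?_⟩
  · -- invertibility of T
    set T : Matrix (Fin Q) (Fin Q) ℂ := Matrix.of (fun j q => w q j) with hT
    have hUsT : Us = A * T := by
      ext i q
      have := congrFun (hw q) i
      simpa [Matrix.mul_apply, Matrix.mulVec, dotProduct, hT] using this.symm
    have hUsli : LinearIndependent ℂ (fun q : Fin Q => Usᵀ q) := by
      have hli := horth.linearIndependent
      have := hli.map' (WithLp.linearEquiv 2 ℂ (Fin K → ℂ)).toLinearMap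
        (LinearEquiv.ker _)
      exact this
    have hUinj : Function.Injective Us.mulVec := Matrix.mulVec_injective_iff.mpr hUsli
    rw [← Matrix.mulVec_injective_iff_isUnit]
    intro x y hxy
    apply hUinj
    rw [hUsT, ← Matrix.mulVec_mulVec, ← Matrix.mulVec_mulVec, hxy]
  · ext i q
    have := congrFun (hw q) i
    simpa [Matrix.mul_apply, Matrix.mulVec, dotProduct] using this.symm
end

section
/- Let A ∈ ℂ^{K×Q} have full column rank and Ψ a Q×Q diagonal matrix with distinct diagonal entries. Suppose U₁ = A₁T and U₂ = A₂T with A₂ = A₁Ψ, where A₁ has full column rank and T is invertible. Then U₁ has full column rank and U₁⁺U₂ = T⁻¹ΨT; in particular the eigenvalues of U₁⁺U₂ are exactly the diagonal entries of Ψ. -/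
open Matrix

open scoped ComplexOrder in
private lemma aux_rank_conjT {K Q : ℕ} (A1 : Matrix (Fin K) (Fin Q) ℂ) :
    (A1ᴴ * A1).rank = A1.rank :=
  Matrix.rank_conjTranspose_mul_self A1

theorem esprit_rotational_invariance
    {K Q : ℕ}
    (A1 : Matrix (Fin K) (Fin Q) ℂ) (hA1 : A1.rank = Q)
    (dΨ : Fin Q → ℂ) (hdist : Function.Injective dΨ)
    (T Ti : Matrix (Fin Q) (Fin Q) ℂ)
    (hTi : T * Ti = 1) (hTi' : Ti * T = 1)
    (U1 U2 : Matrix (Fin K) (Fin Q) ℂ)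
    (hU1 : U1 = A1 * T)
    (hU2 : U2 = A1 * Matrix.diagonal dΨ * T) :
    U1.rank = Q ∧
    ∃ L : Matrix (Fin Q) (Fin K) ℂ, L * U1 = 1 ∧
      ∀ L' : Matrix (Fin Q) (Fin K) ℂ, L' * U1 = 1 →
        L' * U2 = Ti * Matrix.diagonal dΨ * T ∧
        spectrum ℂ (L' * U2) = Set.range dΨ := by
  have hdetT : IsUnit T.det := IsUnit.of_mul_eq_one Ti.det (by rw [← det_mul, hTi, det_one])
  have hrank : U1.rank = Q := by rw [hU1, rank_mul_eq_left_of_isUnit_det _ _ hdetT, hA1]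
  refine ⟨hrank, ?_⟩
  -- `A1ᴴ * A1` is invertible since `A1` has full column rank
  have hAA : (A1ᴴ * A1).rank = Q := by rw [aux_rank_conjT, hA1]
  have hAAunit : IsUnit (A1ᴴ * A1) := by
    rw [← Matrix.mulVec_surjective_iff_isUnit]
    have htop : LinearMap.range (A1ᴴ * A1).mulVecLin = ⊤ :=
      Submodule.eq_top_of_finrank_eq (by
        have : Module.finrank ℂ (Fin Q → ℂ) = Q := by simp
        rw [this]; simpa [Matrix.rank] using hAA)
    exact fun v => LinearMap.range_eq_top.mp htop v
  obtain ⟨B, hB⟩ := hAAunit.exists_left_inv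
  have hBA1 : (B * A1ᴴ) * A1 = 1 := by rw [Matrix.mul_assoc]; exact hB
  have key : ∀ L' : Matrix (Fin Q) (Fin K) ℂ, L' * U1 = 1 →
      L' * U2 = Ti * Matrix.diagonal dΨ * T ∧
      spectrum ℂ (L' * U2) = Set.range dΨ := by
    intro L' hL'
    have h1 : (L' * A1) * T = 1 := by rw [Matrix.mul_assoc, ← hU1, hL']
    have hLA1 : L' * A1 = Ti := by
      calc L' * A1 = ((L' * A1) * T) * Ti := by
            rw [Matrix.mul_assoc (L' * A1), hTi, Matrix.mul_one]
        _ = Ti := by rw [h1, Matrix.one_mul]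
    have hLU2 : L' * U2 = Ti * Matrix.diagonal dΨ * T := by
      rw [hU2, ← Matrix.mul_assoc, ← Matrix.mul_assoc, hLA1]
    refine ⟨hLU2, ?_⟩
    rw [hLU2]
    let u : (Matrix (Fin Q) (Fin Q) ℂ)ˣ := ⟨T, Ti, hTi, hTi'⟩
    have hc := spectrum.units_conjugate' (R := ℂ) (a := Matrix.diagonal dΨ) (u := u)
    have : (↑u⁻¹ : Matrix (Fin Q) (Fin Q) ℂ) * Matrix.diagonal dΨ * (↑u : Matrix (Fin Q) (Fin Q) ℂ)
        = Ti * Matrix.diagonal dΨ * T := rfl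
    rw [this] at hc
    rw [hc, spectrum_diagonal]
  refine ⟨Ti * (B * A1ᴴ), ?_, key⟩
  rw [hU1, Matrix.mul_assoc, ← Matrix.mul_assoc (B * A1ᴴ), hBA1, Matrix.one_mul, hTi']
end

section
/- Let Ψ and Ω be Q×Q diagonal matrices, with the diagonal entries of Ψ distinct, and T invertible. If M₁ = T⁻¹ΨT and M₂ = T⁻¹ΩT, then any eigendecomposition M₁ = S⁻¹Ψ'S with Ψ' diagonal satisfies Ψ' = PΨP⁻¹ for some permutation matrix P and S = D P T for some invertible diagonal D; consequently S M₂ S⁻¹ = P Ω P⁻¹ is diagonal with the same permutation P, so the pairing between diagonal entries of Ψ and Ω is preserved. -/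
open Matrix

/-- Permutation matrix of `σ`. -/
def permMatrix {Q : ℕ} (σ : Equiv.Perm (Fin Q)) : Matrix (Fin Q) (Fin Q) ℂ :=
  (Equiv.toPEquiv σ).toMatrix

theorem joint_diagonalization_pairing
    {Q : ℕ}
    (dΨ dΩ dΨ' : Fin Q → ℂ) (hdist : Function.Injective dΨ)
    (T Ti S Si : Matrix (Fin Q) (Fin Q) ℂ)
    (hT : T * Ti = 1) (hT' : Ti * T = 1)
    (hS : S * Si = 1) (hS' : Si * S = 1)
    -- M₁ = T⁻¹ Ψ T admits the eigendecomposition M₁ = S⁻¹ Ψ' S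
    (hM1 : Ti * Matrix.diagonal dΨ * T = Si * Matrix.diagonal dΨ' * S) :
    ∃ (σ : Equiv.Perm (Fin Q)) (dD : Fin Q → ℂ),
      (∀ q, dD q ≠ 0) ∧
      dΨ' = dΨ ∘ σ ∧
      S = Matrix.diagonal dD * permMatrix σ * T ∧
      S * (Ti * Matrix.diagonal dΩ * T) * Si = Matrix.diagonal (dΩ ∘ σ) := by
  classical
  set W : Matrix (Fin Q) (Fin Q) ℂ := S * Ti with hWdef
  set V : Matrix (Fin Q) (Fin Q) ℂ := T * Si with hVdef
  have hWV : W * V = 1 := by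
    rw [hWdef, hVdef, mul_assoc S Ti (T * Si), ← mul_assoc Ti T Si, hT', one_mul, hS]
  have hVW : V * W = 1 := by
    rw [hWdef, hVdef, mul_assoc T Si (S * Ti), ← mul_assoc Si S Ti, hS', one_mul, hT]
  have hsandwich : ∀ X : Matrix (Fin Q) (Fin Q) ℂ,
      S * (Ti * X * T) * Si = W * X * V := by
    intro X
    rw [hWdef, hVdef]
    simp only [Matrix.mul_assoc]
  have hΨ' : Matrix.diagonal dΨ' = W * Matrix.diagonal dΨ * V := by
    rw [← hsandwich, hM1, mul_assoc Si (Matrix.diagonal dΨ') S,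
      ← mul_assoc S Si _, hS, one_mul, mul_assoc, hS, mul_one]
  have hcomm : W * Matrix.diagonal dΨ = Matrix.diagonal dΨ' * W := by
    rw [hΨ', mul_assoc, mul_assoc, hVW, mul_one]
  have hentry : ∀ i j, W i j * dΨ j = dΨ' i * W i j := by
    intro i j
    have := congrFun (congrFun hcomm i) j
    simpa [Matrix.mul_diagonal, Matrix.diagonal_mul] using this
  have hval : ∀ i j, W i j ≠ 0 → dΨ j = dΨ' i := by
    intro i j h
    have := hentry i j
    rw [mul_comm (W i j) (dΨ j)] at this
    exact mul_right_cancel₀ h this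
  have hrow : ∀ i, ∃ j, W i j ≠ 0 := by
    intro i
    by_contra h
    push_neg at h
    have := congrFun (congrFun hWV i) i
    simp [Matrix.mul_apply, h, Matrix.one_apply] at this
  set f : Fin Q → Fin Q := fun i => (hrow i).choose with hfdef
  have hf : ∀ i, W i (f i) ≠ 0 := fun i => (hrow i).choose_spec
  have huniq : ∀ i j, W i j ≠ 0 → j = f i := by
    intro i j h
    exact hdist ((hval i j h).trans (hval i (f i) (hf i)).symm)
  have hsurj : Function.Surjective f := by
    intro k
    by_contra h
    push_neg at h
    have hcol : ∀ i, W i k = 0 := by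
      intro i
      by_contra hw
      exact h i (huniq i k hw).symm
    have := congrFun (congrFun hVW k) k
    simp [Matrix.mul_apply, hcol, Matrix.one_apply] at this
  have hinj : Function.Injective f := Finite.injective_iff_surjective.mpr hsurj
  refine ⟨Equiv.ofBijective f ⟨hinj, hsurj⟩, fun q => W q (f q), hf, ?_, ?_, ?_⟩
  · funext i
    exact (hval i (f i) (hf i)).symm
  · have hP : ∀ i j, permMatrix (Equiv.ofBijective f ⟨hinj, hsurj⟩) i j
        = if j = f i then 1 else 0 := by
      intro i j
      simp [permMatrix, PEquiv.toMatrix, Equiv.toPEquiv, eq_comm]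
      rfl
    have hW_eq : W = Matrix.diagonal (fun q => W q (f q)) *
        permMatrix (Equiv.ofBijective f ⟨hinj, hsurj⟩) := by
      funext i j
      rw [Matrix.diagonal_mul, hP]
      by_cases hij : j = f i
      · simp [hij]
      · simp only [if_neg hij, mul_zero]
        by_contra hw
        exact hij (huniq i j hw)
    rw [← hW_eq, hWdef, mul_assoc, hT', mul_one]
  · rw [hsandwich]
    set V' : Matrix (Fin Q) (Fin Q) ℂ :=
      Matrix.of fun i j => if i = f j then (W j (f j))⁻¹ else 0 with hV'def
    have hWV' : W * V' = 1 := by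
      funext i k
      rw [Matrix.mul_apply]
      have : ∀ j, W i j * V' j k = if j = f i then W i j * V' j k else 0 := by
        intro j
        by_cases hj : j = f i
        · simp [hj]
        · have : W i j = 0 := by
            by_contra hw; exact hj (huniq i j hw)
          simp [hj, this]
      rw [Finset.sum_congr rfl fun j _ => this j, Finset.sum_ite_eq']
      simp only [Finset.mem_univ, if_true, hV'def, Matrix.of_apply]
      by_cases hik : i = k
      · subst hik
        simp [mul_inv_cancel₀ (hf i), Matrix.one_apply]
      · have : f i ≠ f k := fun h => hik (hinj h)
        simp [this, hik, Matrix.one_apply]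
    have hVeq : V = V' := by
      have h1 : V * (W * V') = V := by rw [hWV', mul_one]
      have h2 : V * (W * V') = V' := by rw [← mul_assoc, hVW, one_mul]
      rw [← h1, h2]
    rw [hVeq]
    funext i k
    rw [Matrix.mul_apply]
    have : ∀ j, (W * Matrix.diagonal dΩ) i j * V' j k
        = if j = f i then (W * Matrix.diagonal dΩ) i j * V' j k else 0 := by
      intro j
      by_cases hj : j = f i
      · simp [hj]
      · have : W i j = 0 := by
          by_contra hw; exact hj (huniq i j hw)
        simp [hj, Matrix.mul_diagonal, this]
    rw [Finset.sum_congr rfl fun j _ => this j, Finset.sum_ite_eq']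
    simp only [Finset.mem_univ, if_true, hV'def, Matrix.of_apply, Matrix.mul_diagonal]
    by_cases hik : i = k
    · subst hik
      simp only [if_pos rfl, Matrix.diagonal_apply_eq, Function.comp_apply,
        Equiv.ofBijective_apply]
      rw [if_pos trivial, mul_comm (W i (f i)) (dΩ (f i)), mul_assoc,
        mul_inv_cancel₀ (hf i), mul_one]
      rfl
    · have hfik : f i ≠ f k := fun h => hik (hinj h)
      simp [hfik, Matrix.diagonal_apply_ne _ hik]
end
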